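/- (Corollary 3.1, case (ii).) Let S0 be a q×q real matrix with spectral radius L = ρ(S0) satisfying 0 < L ≤ 1, and let H be an N×N real matrix every complex eigenvalue of which has strictly positive real part. For each complex eigenvalue h of H write Δ(h) = |h|²/L² − (Im h)². Then Δ(h) > 0 for every eigenvalue h, the maximum over eigenvalues h of (Re h − √Δ(h))/|h|² is at most 0 and is strictly less than the minimum over eigenvalues h of (Re h + √Δ(h))/|h|², which is strictly positive; and for every real μ strictly between this maximum and this minimum the matrix I_N⊗S0 − μ(H⊗S0) is Schur. In particular, there exists a positive real μ making I_N⊗S0 − μ(H⊗S0) Schur. -/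

import Mathlib

open Matrix Kronecker

/-- The complex eigenvalues (spectrum of the complexification) of a real square matrix. -/
def specC {ι : Type} [Fintype ι] [DecidableEq ι] (M : Matrix ι ι ℝ) : Set ℂ :=
  spectrum ℂ (M.map (fun x => (x : ℂ)))

/-- A real square matrix is Schur if all its complex eigenvalues have modulus `< 1`. -/
def IsSchur {ι : Type} [Fintype ι] [DecidableEq ι] (M : Matrix ι ι ℝ) : Prop :=
  ∀ z ∈ specC M, ‖z‖ < 1

section Auxiliary

variable {n : Type} [Fintype n] [DecidableEq n]

lemma aux_mem_spec_iff_det (M : Matrix n n ℂ) (z : ℂ) :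
    z ∈ spectrum ℂ M ↔ (z • (1 : Matrix n n ℂ) - M).det = 0 := by
  rw [spectrum.mem_iff, Algebra.algebraMap_eq_smul_one, Matrix.isUnit_iff_isUnit_det,
    isUnit_iff_ne_zero, not_ne_iff]

lemma aux_mem_spec_of_mulVec {M : Matrix n n ℂ} {z : ℂ} {v : n → ℂ} (hv : v ≠ 0)
    (h : M.mulVec v = z • v) : z ∈ spectrum ℂ M := by
  rw [aux_mem_spec_iff_det, ← Matrix.exists_mulVec_eq_zero_iff]
  refine ⟨v, hv, ?_⟩
  rw [Matrix.sub_mulVec, Matrix.smul_mulVec, Matrix.one_mulVec, h, sub_self]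

lemma aux_exists_mulVec_of_mem_spec {M : Matrix n n ℂ} {z : ℂ} (h : z ∈ spectrum ℂ M) :
    ∃ v : n → ℂ, v ≠ 0 ∧ M.mulVec v = z • v := by
  rw [aux_mem_spec_iff_det, ← Matrix.exists_mulVec_eq_zero_iff] at h
  obtain ⟨v, hv, h⟩ := h
  refine ⟨v, hv, ?_⟩
  rw [Matrix.sub_mulVec, Matrix.smul_mulVec, Matrix.one_mulVec, sub_eq_zero] at h
  exact h.symm

lemma aux_zero_mem_spec_of_det {M : Matrix n n ℂ} (h : M.det = 0) :
    (0 : ℂ) ∈ spectrum ℂ M := by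
  rw [aux_mem_spec_iff_det, zero_smul, zero_sub, Matrix.det_neg, h, mul_zero]

/-- Key lemma: every eigenvalue of a Kronecker product `A ⊗ₖ B` over `ℂ` is a product of an
eigenvalue of `A` and an eigenvalue of `B`. -/
lemma aux_spec_kronecker {N q : ℕ} (hN : 0 < N) (hq : 0 < q)
    (A : Matrix (Fin N) (Fin N) ℂ) (B : Matrix (Fin q) (Fin q) ℂ) {z : ℂ}
    (hz : z ∈ spectrum ℂ (A ⊗ₖ B)) :
    ∃ a ∈ spectrum ℂ A, ∃ b ∈ spectrum ℂ B, z = a * b := by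
  have : NeZero N := ⟨hN.ne'⟩
  have : NeZero q := ⟨hq.ne'⟩
  rcases eq_or_ne z 0 with rfl | hz0
  · -- singular case
    rw [aux_mem_spec_iff_det, zero_smul, zero_sub, Matrix.det_neg, Matrix.det_kronecker] at hz
    simp only [Fintype.card_fin] at hz
    have h2 : A.det ^ q * B.det ^ N = 0 := by
      rcases mul_eq_zero.mp hz with h | h
      · exact absurd h (pow_ne_zero _ (by norm_num))
      · exact h
    rcases mul_eq_zero.mp h2 with h | h
    · obtain ⟨b, hb⟩ := spectrum.nonempty_of_isAlgClosed_of_finiteDimensional ℂ B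
      exact ⟨0, aux_zero_mem_spec_of_det (pow_eq_zero_iff hq.ne' |>.mp h), b, hb, by ring⟩
    · obtain ⟨a, ha⟩ := spectrum.nonempty_of_isAlgClosed_of_finiteDimensional ℂ A
      exact ⟨a, ha, 0, aux_zero_mem_spec_of_det (pow_eq_zero_iff hN.ne' |>.mp h), by ring⟩
  · obtain ⟨v, hv, hve⟩ := aux_exists_mulVec_of_mem_spec hz
    set X : Matrix (Fin N) (Fin q) ℂ := Matrix.of fun i j => v (i, j) with hX
    have hXne : X ≠ 0 := by
      intro h
      apply hv
      funext p
      have := congrFun (congrFun h p.1) p.2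
      simpa [hX] using this
    have hkey : A * X * Bᵀ = z • X := by
      ext i j
      have h1 : ((A ⊗ₖ B).mulVec v) (i, j) = z * v (i, j) := by rw [hve]; rfl
      calc (A * X * Bᵀ) i j = ∑ l, (∑ k, A i k * X k l) * B j l := by
            simp [Matrix.mul_apply, Matrix.transpose_apply]
        _ = ∑ k, ∑ l, (A i k * B j l) * v (k, l) := by
            rw [Finset.sum_comm]
            refine Finset.sum_congr rfl fun k _ => ?_
            rw [Finset.sum_mul]
            · refine Finset.sum_congr rfl fun l _ => by simp [hX]; ring
        _ = ((A ⊗ₖ B).mulVec v) (i, j) := by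
            simp [Matrix.mulVec, dotProduct, Fintype.sum_prod_type,
              Matrix.kroneckerMap_apply]
        _ = z * v (i, j) := h1
        _ = (z • X) i j := by simp [hX]
    -- the cyclic subspace generated by `X` under right multiplication by `Bᵀ`
    set W : Submodule ℂ (Matrix (Fin N) (Fin q) ℂ) :=
      Submodule.span ℂ (Set.range fun k : ℕ => X * Bᵀ ^ k) with hWdef
    have hXW : X ∈ W := Submodule.subset_span ⟨0, by simp⟩
    have : Nontrivial W := by
      refine nontrivial_of_ne ⟨X, hXW⟩ 0 ?_
      simp [Ne, Submodule.mk_eq_zero, hXne]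
    -- right multiplication by Bᵀ
    set R : Matrix (Fin N) (Fin q) ℂ →ₗ[ℂ] Matrix (Fin N) (Fin q) ℂ :=
      { toFun := fun M => M * Bᵀ
        map_add' := fun M M' => Matrix.add_mul M M' Bᵀ
        map_smul' := fun c M => Matrix.smul_mul c M Bᵀ } with hRdef
    have hWR : ∀ m ∈ W, R m ∈ W := by
      intro m hm
      induction hm using Submodule.span_induction with
      | mem x hx =>
          obtain ⟨k, rfl⟩ := hx
          exact Submodule.subset_span ⟨k + 1, by
            simp only [hRdef, LinearMap.coe_mk, AddHom.coe_mk, pow_succ, Matrix.mul_assoc]⟩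
      | zero => rw [map_zero]; exact W.zero_mem
      | add x y _ _ hx hy => rw [map_add]; exact W.add_mem hx hy
      | smul c x _ hx => rw [_root_.map_smul]; exact W.smul_mem c hx
    have hcomm : ∀ (M : Matrix (Fin N) (Fin q) ℂ) (k : ℕ),
        M * Bᵀ ^ k * Bᵀ = M * Bᵀ * Bᵀ ^ k := by
      intro M k
      rw [Matrix.mul_assoc, Matrix.mul_assoc, ← pow_succ, ← pow_succ']
    have hzW : ∀ m ∈ W, A * m * Bᵀ = z • m := by
      intro m hm
      induction hm using Submodule.span_induction with
      | mem x hx =>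
          obtain ⟨k, rfl⟩ := hx
          calc A * (X * Bᵀ ^ k) * Bᵀ = (A * X * Bᵀ) * Bᵀ ^ k := by
                rw [Matrix.mul_assoc A (X * Bᵀ ^ k) Bᵀ, hcomm, ← Matrix.mul_assoc,
                  ← Matrix.mul_assoc]
            _ = z • (X * Bᵀ ^ k) := by rw [hkey, Matrix.smul_mul]
      | zero => simp
      | add x y _ _ hx hy => rw [Matrix.mul_add, Matrix.add_mul, hx, hy, smul_add]
      | smul c x _ hx =>
          rw [Matrix.mul_smul, Matrix.smul_mul, hx, smul_comm]
    obtain ⟨b, hbeig⟩ := Module.End.exists_eigenvalue (R.restrict hWR)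
    obtain ⟨y, hy⟩ := hbeig.exists_hasEigenvector
    set Y : Matrix (Fin N) (Fin q) ℂ := (y : Matrix (Fin N) (Fin q) ℂ) with hYdef
    have hYne : Y ≠ 0 := by
      simpa [hYdef, Submodule.coe_eq_zero] using hy.2
    have hYB : Y * Bᵀ = b • Y := by
      have := hy.1
      have h2 : (R.restrict hWR) y = b • y := by
        rwa [Module.End.mem_eigenspace_iff] at this
      have := congrArg (Subtype.val) h2
      simpa [hRdef, LinearMap.restrict_apply] using this
    have hbne : b ≠ 0 := by
      rintro rfl
      have hzY := hzW Y y.2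
      rw [Matrix.mul_assoc, hYB, zero_smul, Matrix.mul_zero] at hzY
      exact hYne (by simpa [smul_eq_zero, hz0] using hzY.symm)
    have hAY : A * Y = (z / b) • Y := by
      have hzY := hzW Y y.2
      rw [Matrix.mul_assoc, hYB, Matrix.mul_smul] at hzY
      have : A * Y = b⁻¹ • (z • Y) := by
        rw [← hzY, inv_smul_smul₀ hbne]
      rw [this, smul_smul, div_eq_inv_mul]
    obtain ⟨i0, j0, hY0⟩ : ∃ i j, Y i j ≠ 0 := by
      by_contra h
      push_neg at h
      exact hYne (by ext i j; simp [h])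
    have hbB : b ∈ spectrum ℂ B := by
      apply aux_mem_spec_of_mulVec (v := fun j => Y i0 j)
      · intro h
        exact hY0 (congrFun h j0)
      · funext j
        have := congrFun (congrFun hYB i0) j
        simpa [Matrix.mul_apply, Matrix.transpose_apply, Matrix.mulVec, dotProduct,
          mul_comm] using this
    have haA : (z / b) ∈ spectrum ℂ A := by
      apply aux_mem_spec_of_mulVec (v := fun i => Y i j0)
      · intro h
        exact hY0 (congrFun h i0)
      · funext i
        have := congrFun (congrFun hAY i) j0
        simpa [Matrix.mul_apply, Matrix.mulVec, dotProduct] using this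
    exact ⟨z / b, haA, b, hbB, by field_simp⟩

lemma aux_kronecker_map_complex {N q : ℕ} (S0 : Matrix (Fin q) (Fin q) ℝ)
    (H : Matrix (Fin N) (Fin N) ℝ) (μ : ℝ) :
    ((1 : Matrix (Fin N) (Fin N) ℝ) ⊗ₖ S0 - μ • (H ⊗ₖ S0)).map (fun x => (x : ℂ)) =
      ((1 : Matrix (Fin N) (Fin N) ℂ) - (μ : ℂ) • H.map (fun x => (x : ℂ))) ⊗ₖ
        (S0.map (fun x => (x : ℂ))) := by
  ext ⟨i, k⟩ ⟨j, l⟩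
  simp only [Matrix.map_apply, Matrix.sub_apply, Matrix.smul_apply, Matrix.kroneckerMap_apply,
    Matrix.one_apply, smul_eq_mul, sub_mul, ite_mul, one_mul, zero_mul]
  split_ifs <;> push_cast <;> ring

lemma aux_spec_one_sub_smul {N : ℕ} (Hc : Matrix (Fin N) (Fin N) ℂ) (μ : ℂ)
    (hne : (spectrum ℂ Hc).Nonempty) :
    spectrum ℂ ((1 : Matrix (Fin N) (Fin N) ℂ) - μ • Hc) =
      (fun h => 1 - μ * h) '' spectrum ℂ Hc := by
  have hA : (1 : Matrix (Fin N) (Fin N) ℂ) - μ • Hc =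
      Polynomial.aeval Hc (1 - Polynomial.C μ * Polynomial.X) := by
    simp [Algebra.smul_def]
  rw [hA, spectrum.map_polynomial_aeval_of_nonempty Hc _ hne]
  funext k
  simp

end Auxiliary

set_option maxHeartbeats 1000000 in
/-- **Corollary 3.1, case (ii).** Suppose `L = ρ(S0)` satisfies
`0 < L ≤ 1` and every complex eigenvalue of `H` has strictly positive real part. With
`Δ(h) = |h|²/L² − (Im h)²`, one has `Δ(h) > 0` for all eigenvalues `h`,
`max_h (Re h − √Δ(h))/|h|² ≤ 0`, this max is `<` the min `min_h (Re h + √Δ(h))/|h|²`,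
which is `> 0`; every real `μ` strictly between the max and the min makes
`I_N ⊗ S0 − μ (H ⊗ S0)` Schur; in particular some `μ > 0` makes it Schur. -/
theorem observer_gain_marginally_stable (N q : ℕ) (hN : 0 < N) (hq : 0 < q)
    (S0 : Matrix (Fin q) (Fin q) ℝ) (H : Matrix (Fin N) (Fin N) ℝ)
    (L : ℝ) (hL : IsGreatest ((fun z : ℂ => ‖z‖) '' specC S0) L) (hLpos : 0 < L) (hL1 : L ≤ 1)
    (hH : ∀ h ∈ specC H, 0 < h.re) :
    (∀ h ∈ specC H, 0 < ‖h‖ ^ 2 / L ^ 2 - h.im ^ 2) ∧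
    sSup ((fun h : ℂ =>
        (h.re - Real.sqrt (‖h‖ ^ 2 / L ^ 2 - h.im ^ 2)) / ‖h‖ ^ 2) ''
        specC H) ≤ 0 ∧
    sSup ((fun h : ℂ =>
        (h.re - Real.sqrt (‖h‖ ^ 2 / L ^ 2 - h.im ^ 2)) / ‖h‖ ^ 2) ''
        specC H) <
      sInf ((fun h : ℂ =>
        (h.re + Real.sqrt (‖h‖ ^ 2 / L ^ 2 - h.im ^ 2)) / ‖h‖ ^ 2) ''
        specC H) ∧
    0 < sInf ((fun h : ℂ =>
        (h.re + Real.sqrt (‖h‖ ^ 2 / L ^ 2 - h.im ^ 2)) / ‖h‖ ^ 2) ''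
        specC H) ∧
    (∀ μ : ℝ,
      sSup ((fun h : ℂ =>
          (h.re - Real.sqrt (‖h‖ ^ 2 / L ^ 2 - h.im ^ 2)) / ‖h‖ ^ 2) ''
          specC H) < μ →
      μ < sInf ((fun h : ℂ =>
          (h.re + Real.sqrt (‖h‖ ^ 2 / L ^ 2 - h.im ^ 2)) / ‖h‖ ^ 2) ''
          specC H) →
      IsSchur ((1 : Matrix (Fin N) (Fin N) ℝ) ⊗ₖ S0 - μ • (H ⊗ₖ S0))) ∧
    (∃ μ : ℝ, 0 < μ ∧
      IsSchur ((1 : Matrix (Fin N) (Fin N) ℝ) ⊗ₖ S0 - μ • (H ⊗ₖ S0))) := by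
  haveI : NeZero N := ⟨hN.ne'⟩
  haveI : NeZero q := ⟨hq.ne'⟩
  set Hc := H.map (fun x => (x : ℂ)) with hHc
  have hfin : (specC H).Finite := Matrix.finite_spectrum Hc
  have hne : (specC H).Nonempty := spectrum.nonempty_of_isAlgClosed_of_finiteDimensional ℂ Hc
  set f : ℂ → ℝ := fun h =>
    (h.re - Real.sqrt (‖h‖ ^ 2 / L ^ 2 - h.im ^ 2)) / ‖h‖ ^ 2 with hf
  set g : ℂ → ℝ := fun h =>
    (h.re + Real.sqrt (‖h‖ ^ 2 / L ^ 2 - h.im ^ 2)) / ‖h‖ ^ 2 with hg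
  have hL2 : L ^ 2 ≤ 1 := by nlinarith
  have hL2pos : 0 < L ^ 2 := by positivity
  have habs : ∀ h ∈ specC H, 0 < ‖h‖ ^ 2 := by
    intro h hh
    have hne0 : h ≠ 0 := by rintro rfl; simpa using hH 0 hh
    exact pow_pos (norm_pos_iff.mpr hne0) 2
  have hsum : ∀ h : ℂ, ‖h‖ ^ 2 = h.re ^ 2 + h.im ^ 2 := by
    intro h; rw [Complex.sq_norm, Complex.normSq_apply]; ring
  have hDelta : ∀ h ∈ specC H, h.re ^ 2 ≤ ‖h‖ ^ 2 / L ^ 2 - h.im ^ 2 := by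
    intro h hh
    have h1 : ‖h‖ ^ 2 / L ^ 2 * L ^ 2 = ‖h‖ ^ 2 := by field_simp
    nlinarith [hsum h, habs h hh]
  have hDpos : ∀ h ∈ specC H, 0 < ‖h‖ ^ 2 / L ^ 2 - h.im ^ 2 := by
    intro h hh
    have := hDelta h hh
    have := hH h hh
    nlinarith
  have hsqrt_ge : ∀ h ∈ specC H,
      h.re ≤ Real.sqrt (‖h‖ ^ 2 / L ^ 2 - h.im ^ 2) := by
    intro h hh
    have := Real.sqrt_le_sqrt (hDelta h hh)
    rwa [Real.sqrt_sq (hH h hh).le] at this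
  have hf_nonpos : ∀ h ∈ specC H, f h ≤ 0 := by
    intro h hh
    exact div_nonpos_of_nonpos_of_nonneg (by linarith [hsqrt_ge h hh]) (habs h hh).le
  have hg_pos : ∀ h ∈ specC H, 0 < g h := by
    intro h hh
    apply div_pos _ (habs h hh)
    have := Real.sqrt_nonneg (‖h‖ ^ 2 / L ^ 2 - h.im ^ 2)
    linarith [hH h hh]
  have hSup_le : sSup (f '' specC H) ≤ 0 := by
    obtain ⟨h, hh, hEq⟩ := (hne.image f).csSup_mem (hfin.image f)
    rw [← hEq]
    exact hf_nonpos h hh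
  have hInf_pos : 0 < sInf (g '' specC H) := by
    obtain ⟨h, hh, hEq⟩ := (hne.image g).csInf_mem (hfin.image g)
    rw [← hEq]
    exact hg_pos h hh
  -- the main Schur statement
  have main : ∀ μ : ℝ, sSup (f '' specC H) < μ → μ < sInf (g '' specC H) →
      IsSchur ((1 : Matrix (Fin N) (Fin N) ℝ) ⊗ₖ S0 - μ • (H ⊗ₖ S0)) := by
    intro μ hμ1 hμ2
    intro ζ hζ
    rw [specC, aux_kronecker_map_complex] at hζ
    obtain ⟨a, ha, b, hb, rfl⟩ := aux_spec_kronecker hN hq _ _ hζ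
    rw [aux_spec_one_sub_smul Hc (μ : ℂ) hne] at ha
    obtain ⟨h, hh, rfl⟩ := ha
    -- real quantities
    set r := h.re
    set m := h.im
    set t2 := ‖h‖ ^ 2 with ht2
    have ht2pos : 0 < t2 := habs h hh
    set s := Real.sqrt (t2 / L ^ 2 - m ^ 2) with hs
    have hs_sq : s ^ 2 = t2 / L ^ 2 - m ^ 2 := Real.sq_sqrt (hDpos h hh).le
    have hfh : (r - s) / t2 < μ :=
      lt_of_le_of_lt (le_csSup (hfin.image f).bddAbove ⟨h, hh, rfl⟩) hμ1
    have hgh : μ < (r + s) / t2 :=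
      lt_of_lt_of_le hμ2 (csInf_le (hfin.image g).bddBelow ⟨h, hh, rfl⟩)
    have h1 : r - s < μ * t2 := by
      rw [div_lt_iff₀ ht2pos] at hfh; linarith
    have h2 : μ * t2 < r + s := by
      rw [lt_div_iff₀ ht2pos] at hgh; linarith
    have hq1 : (μ * t2 - r) ^ 2 < t2 / L ^ 2 - m ^ 2 := by nlinarith
    have hdiv : t2 / L ^ 2 * L ^ 2 = t2 := by field_simp
    have htrm : t2 = r ^ 2 + m ^ 2 := hsum h
    -- modulus of b
    have hbL : ‖b‖ ≤ L := hL.2 ⟨b, hb, rfl⟩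
    have hbnn : 0 ≤ ‖b‖ := norm_nonneg b
    -- modulus of a
    have hare : (1 - (μ : ℂ) * h).re = 1 - μ * r := by simp [r]
    have haim : (1 - (μ : ℂ) * h).im = -(μ * m) := by simp [m]
    have ha2 : ‖1 - (μ : ℂ) * h‖ ^ 2 = (1 - μ * r) ^ 2 + (μ * m) ^ 2 := by
      rw [Complex.sq_norm, Complex.normSq_apply, hare, haim]; ring
    have hann : 0 ≤ ‖1 - (μ : ℂ) * h‖ := norm_nonneg _
    have hkey : ((1 - μ * r) ^ 2 + (μ * m) ^ 2) * L ^ 2 < 1 := by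
      have e1 : L ^ 2 * (t2 / L ^ 2 - m ^ 2) = t2 - L ^ 2 * m ^ 2 := by
        field_simp
      have hq2 := mul_lt_mul_of_pos_left hq1 hL2pos
      rw [e1] at hq2
      rw [htrm] at hq2
      have ht2pos' : 0 < r ^ 2 + m ^ 2 := htrm ▸ ht2pos
      have hid : ((1 - μ * r) ^ 2 + (μ * m) ^ 2) * L ^ 2 * (r ^ 2 + m ^ 2)
          = L ^ 2 * (μ * (r ^ 2 + m ^ 2) - r) ^ 2 + L ^ 2 * m ^ 2 := by ring
      nlinarith [hq2, hid, ht2pos']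
    show ‖(1 - (μ : ℂ) * h) * b‖ < 1
    rw [norm_mul]
    have hP : ‖1 - (μ : ℂ) * h‖ * L < 1 := by
      nlinarith [ha2, hkey, mul_nonneg hann hLpos.le]
    calc ‖1 - (μ : ℂ) * h‖ * ‖b‖
        ≤ ‖1 - (μ : ℂ) * h‖ * L := mul_le_mul_of_nonneg_left hbL hann
      _ < 1 := hP
  refine ⟨hDpos, hSup_le, lt_of_le_of_lt hSup_le hInf_pos, hInf_pos, main, ?_⟩
  refine ⟨sInf (g '' specC H) / 2, by linarith, main _ (by linarith) (by linarith)⟩
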